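/- For all positive integers r, n, the rank generating function of the balanced elements satisfies Σ_{w ∈ C(r,n)} q^{ℓ_{T(r,n)}(w)} = ∏_{i=1}^{n-1} (1 + r·i·q). -/

import Mathlib

attribute [local instance] Classical.propDecidable

/-- The absolute length of `w` with respect to a set `T`. -/
noncomputable def absLength {G : Type*} [Group G] (T : Set G) (w : G) : ℕ :=
  sInf {n | ∃ l : List G, (∀ t ∈ l, t ∈ T) ∧ l.prod = w ∧ l.length = n}

/-- The absolute order: `u ≤_T v` iff `ℓ_T(u) + ℓ_T(v u⁻¹) = ℓ_T(v)`. -/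
def absLe {G : Type*} [Group G] (T : Set G) (u v : G) : Prop :=
  absLength T u + absLength T (v * u⁻¹) = absLength T v

/-- The wreath product `G(r,n) = Z_r ≀ S_n`, whose elements are the pairs
`[(c₁,…,c_n); π]` with `c_i ∈ Z_r` and `π ∈ S_n`. -/
def WreathG (r n : ℕ) : Type := (Fin n → ZMod r) × Equiv.Perm (Fin n)

namespace WreathG

variable {r n : ℕ}

instance : Mul (WreathG r n) :=
  ⟨fun g h => (fun i => g.1 i + h.1 (g.2⁻¹ i), g.2 * h.2)⟩

instance : One (WreathG r n) := ⟨(fun _ => 0, 1)⟩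

instance : Inv (WreathG r n) := ⟨fun g => (fun i => -g.1 (g.2 i), g.2⁻¹)⟩

instance : Group (WreathG r n) :=
  Group.ofLeftAxioms
    (by
      rintro ⟨a, α⟩ ⟨b, β⟩ ⟨c, γ⟩
      show ((fun i => (a i + b (α⁻¹ i)) + c ((α * β)⁻¹ i), (α * β) * γ) : WreathG r n) =
        (fun i => a i + (b (α⁻¹ i) + c (β⁻¹ (α⁻¹ i))), α * (β * γ))
      refine Prod.ext ?_ (mul_assoc α β γ)
      funext i
      show a i + b (α⁻¹ i) + c ((α * β)⁻¹ i) = a i + (b (α⁻¹ i) + c (β⁻¹ (α⁻¹ i)))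
      rw [add_assoc, mul_inv_rev, Equiv.Perm.mul_apply])
    (by
      rintro ⟨a, α⟩
      show ((fun i => (0 : ZMod r) + a ((1 : Equiv.Perm (Fin n))⁻¹ i), 1 * α) : WreathG r n)
        = (a, α)
      refine Prod.ext ?_ (one_mul α)
      funext i
      simp)
    (by
      rintro ⟨a, α⟩
      show ((fun i => -a (α i) + a (α⁻¹⁻¹ i), α⁻¹ * α) : WreathG r n) = ((fun _ => 0), 1)
      refine Prod.ext ?_ (inv_mul_cancel α)
      funext i
      simp)

instance [NeZero r] : Fintype (WreathG r n) :=
  inferInstanceAs (Fintype ((Fin n → ZMod r) × Equiv.Perm (Fin n)))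

/-- The canonical projection `ψ : G(r,n) → S_n`, `[c̄; π] ↦ π`. -/
def proj : WreathG r n →* Equiv.Perm (Fin n) where
  toFun g := g.2
  map_one' := rfl
  map_mul' _ _ := rfl

/-- An element of `G(r,n)` is balanced if, for each of its cycles, the sum of the colors
of the elements of the cycle is zero (mod `r`). -/
def Balanced (g : WreathG r n) : Prop :=
  ∀ i : Fin n, (∑ j ∈ Finset.univ.filter (g.2.SameCycle i ·), g.1 j) = 0

/-- The primitive `r`-th root of unity `e^{2πi/r}`. -/
noncomputable def zeta (r : ℕ) : ℂ := Complex.exp (2 * Real.pi * Complex.I / r)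

/-- The standard action of `G(r,n)` on `ℂⁿ`, permuting coordinates and multiplying them
by `r`-th roots of unity: `(g · v)_i = ζ^{c_i} v_{π⁻¹(i)}`. -/
noncomputable def toLin (g : WreathG r n) : (Fin n → ℂ) →ₗ[ℂ] (Fin n → ℂ) where
  toFun v := fun i => zeta r ^ (g.1 i).val * v (g.2⁻¹ i)
  map_add' u v := by funext i; simp [mul_add]
  map_smul' c v := by funext i; simp [Pi.smul_apply, smul_eq_mul]; ring

/-- The set `T(r,n)` of pseudoreflections of `G(r,n)`: the elements fixing a hyperplane
(codimension one subspace) of `ℂⁿ`. -/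
noncomputable def pseudoReflections (r n : ℕ) : Set (WreathG r n) :=
  {g | Module.finrank ℂ (LinearMap.ker (toLin g - LinearMap.id)) = n - 1}

/-- The absolute order on the set `C(r,n)` of balanced elements: the reflexive and
transitive closure of the relation consisting of the pairs `(u,v)` of balanced elements
with `v = τ u` for some balanced pseudoreflection `τ` and `ℓ_{T(r,n)}(u) < ℓ_{T(r,n)}(v)`. -/
def cLe (u v : WreathG r n) : Prop :=
  Relation.ReflTransGen
    (fun a b => Balanced a ∧ Balanced b ∧
      ∃ τ ∈ pseudoReflections r n, Balanced τ ∧ b = τ * a ∧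
        absLength (pseudoReflections r n) a < absLength (pseudoReflections r n) b)
    u v

end WreathG

/-!
Statement 11: for all positive integers r, n, the rank generating function of the
balanced elements satisfies Σ_{w ∈ C(r,n)} q^{ℓ_{T(r,n)}(w)} = ∏_{i=1}^{n-1} (1 + r·i·q).
-/
section Helper
open WreathG Equiv Equiv.Perm Finset

variable {r n : ℕ}

namespace WreathHelper

lemma wmul_fst (g h : WreathG r n) : (g * h).1 = fun i => g.1 i + h.1 (g.2⁻¹ i) := rfl
lemma wmul_snd (g h : WreathG r n) : (g * h).2 = g.2 * h.2 := rfl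
lemma wone_fst : (1 : WreathG r n).1 = fun _ => 0 := rfl
lemma wone_snd : (1 : WreathG r n).2 = 1 := rfl

lemma zeta_pow_r [NeZero r] : zeta r ^ r = 1 := by
  rw [zeta, ← Complex.exp_nat_mul]
  have hr : (r : ℂ) ≠ 0 := Nat.cast_ne_zero.mpr (NeZero.ne r)
  rw [show (r : ℂ) * (2 * Real.pi * Complex.I / r) = 2 * Real.pi * Complex.I by
    field_simp]
  exact Complex.exp_two_pi_mul_I

lemma zeta_pow_mod [NeZero r] (m : ℕ) : zeta r ^ (m % r) = zeta r ^ m := by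
  conv_rhs => rw [← Nat.div_add_mod m r]
  rw [pow_add, pow_mul, zeta_pow_r, one_pow, one_mul]

lemma zeta_pow_val_add [NeZero r] (x y : ZMod r) :
    zeta r ^ (x + y).val = zeta r ^ x.val * zeta r ^ y.val := by
  rw [ZMod.val_add, zeta_pow_mod, pow_add]

lemma zeta_pow_val_zero [NeZero r] : zeta r ^ (0 : ZMod r).val = 1 := by
  rw [ZMod.val_zero, pow_zero]

lemma toLin_apply (g : WreathG r n) (v : Fin n → ℂ) (i : Fin n) :
    toLin g v i = zeta r ^ (g.1 i).val * v (g.2⁻¹ i) := rfl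

lemma toLin_one [NeZero r] : toLin (1 : WreathG r n) = LinearMap.id := by
  apply LinearMap.ext; intro v; funext i
  rw [toLin_apply, wone_fst, wone_snd, zeta_pow_val_zero, one_mul]
  simp

lemma toLin_mul [NeZero r] (g h : WreathG r n) :
    toLin (g * h) = (toLin g).comp (toLin h) := by
  apply LinearMap.ext; intro v; funext i
  rw [LinearMap.comp_apply, toLin_apply, toLin_apply, toLin_apply, wmul_fst, wmul_snd,
    zeta_pow_val_add, mul_inv_rev, Equiv.Perm.mul_apply, mul_assoc]

/-- The fixed subspace of `g`. -/
noncomputable def fixSub (g : WreathG r n) : Submodule ℂ (Fin n → ℂ) :=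
  LinearMap.ker (toLin g - LinearMap.id)

lemma mem_fixSub {g : WreathG r n} {v : Fin n → ℂ} : v ∈ fixSub g ↔ toLin g v = v := by
  rw [fixSub, LinearMap.mem_ker, LinearMap.sub_apply, LinearMap.id_apply, sub_eq_zero]

lemma pseudo_iff {g : WreathG r n} :
    g ∈ pseudoReflections r n ↔ Module.finrank ℂ (fixSub g) = n - 1 := Iff.rfl

/-- The orbit of `i` under `π` as a finset. -/
noncomputable def orb (π : Equiv.Perm (Fin n)) (i : Fin n) : Finset (Fin n) :=
  Finset.univ.filter (π.SameCycle i ·)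

lemma mem_orb {π : Equiv.Perm (Fin n)} {i j : Fin n} : j ∈ orb π i ↔ π.SameCycle i j := by
  simp [orb]

lemma self_mem_orb {π : Equiv.Perm (Fin n)} (i : Fin n) : i ∈ orb π i :=
  mem_orb.mpr (Equiv.Perm.SameCycle.refl _ _)

lemma orb_eq_of_sameCycle {π : Equiv.Perm (Fin n)} {i j : Fin n} (h : π.SameCycle i j) :
    orb π i = orb π j := by
  ext k; simp only [mem_orb]
  exact ⟨fun hk => h.symm.trans hk, fun hk => h.trans hk⟩

lemma balanced_iff {g : WreathG r n} :
    Balanced g ↔ ∀ i : Fin n, (∑ j ∈ orb g.2 i, g.1 j) = 0 := Iff.rfl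

/-- `i` is the chosen (minimal) representative of its cycle. -/
def IsRep (π : Equiv.Perm (Fin n)) (i : Fin n) : Prop := ∀ j, π.SameCycle i j → i ≤ j

noncomputable def repsF (π : Equiv.Perm (Fin n)) : Finset (Fin n) :=
  Finset.univ.filter (IsRep π)

lemma mem_repsF {π : Equiv.Perm (Fin n)} {i : Fin n} : i ∈ repsF π ↔ IsRep π i := by
  simp [repsF]

/-- The number of cycles (including fixed points) of `π`. -/
noncomputable def cyc (π : Equiv.Perm (Fin n)) : ℕ := (repsF π).card

lemma cyc_le (π : Equiv.Perm (Fin n)) : cyc π ≤ n := by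
  simpa [cyc, repsF] using (Finset.card_filter_le Finset.univ (IsRep π))

lemma min_orb_isRep (π : Equiv.Perm (Fin n)) (i : Fin n) :
    IsRep π ((orb π i).min' ⟨i, self_mem_orb i⟩) := by
  intro j hj
  have hm : (orb π i).min' ⟨i, self_mem_orb i⟩ ∈ orb π i := Finset.min'_mem _ _
  have : j ∈ orb π i := mem_orb.mpr ((mem_orb.mp hm).trans hj)
  exact Finset.min'_le _ _ this

lemma sameCycle_min_orb (π : Equiv.Perm (Fin n)) (i : Fin n) :
    π.SameCycle ((orb π i).min' ⟨i, self_mem_orb i⟩) i :=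
  (mem_orb.mp (Finset.min'_mem (orb π i) ⟨i, self_mem_orb i⟩)).symm

lemma isRep_unique {π : Equiv.Perm (Fin n)} {i j : Fin n} (hi : IsRep π i) (hj : IsRep π j)
    (h : π.SameCycle i j) : i = j :=
  le_antisymm (hi j h) (hj i h.symm)

lemma sameCycle_iff_exists_pow {π : Equiv.Perm (Fin n)} {i j : Fin n} :
    π.SameCycle i j ↔ ∃ k : ℕ, (π ^ k) i = j := by
  constructor
  · intro h
    obtain ⟨k, _, hk⟩ := h.exists_pow_eq'
    exact ⟨k, hk⟩
  · rintro ⟨k, rfl⟩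
    exact ⟨(k : ℤ), by simp⟩

end WreathHelper
end Helper
section Helper2
open WreathG Equiv Equiv.Perm Finset
namespace WreathHelper

variable {n : ℕ}

lemma pow_succ_apply (σ : Equiv.Perm (Fin n)) (k : ℕ) (x : Fin n) :
    (σ ^ (k + 1)) x = (σ ^ k) (σ x) := by
  rw [pow_succ, Equiv.Perm.mul_apply]

lemma sc_apply (π : Equiv.Perm (Fin n)) (x : Fin n) : π.SameCycle x (π x) :=
  ⟨1, by simp⟩

section SwapMul

variable {π : Equiv.Perm (Fin n)} {a : Fin n}

lemma swapMul_apply_self : (Equiv.swap a (π a) * π) a = a := by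
  rw [Equiv.Perm.mul_apply, Equiv.swap_apply_right]

lemma swapMul_apply_ne {x : Fin n} (hx : x ≠ a) : (Equiv.swap a (π a) * π) x ≠ a := by
  intro h
  exact hx ((Equiv.swap a (π a) * π).injective
    (h.trans (swapMul_apply_self (π := π) (a := a)).symm))

lemma sameCycle_swapMul_step {x : Fin n} (hx : x ≠ a) :
    π.SameCycle x ((Equiv.swap a (π a) * π) x) := by
  by_cases h : π x = a
  · have heq : (Equiv.swap a (π a) * π) x = π (π x) := by
      rw [Equiv.Perm.mul_apply, h, Equiv.swap_apply_left, ← h]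
    rw [heq]
    exact (sc_apply π x).trans (sc_apply π (π x))
  · have hxb : π x ≠ π a := fun hc => hx (π.injective hc)
    have heq : (Equiv.swap a (π a) * π) x = π x := by
      rw [Equiv.Perm.mul_apply, Equiv.swap_apply_of_ne_of_ne h hxb]
    rw [heq]
    exact sc_apply π x

lemma sameCycle_swapMul_aux1 :
    ∀ (k : ℕ) (x : Fin n), x ≠ a → π.SameCycle x (((Equiv.swap a (π a) * π) ^ k) x) := by
  intro k
  induction k with
  | zero => intro x _; simpa using Equiv.Perm.SameCycle.refl π x
  | succ k ih =>
    intro x hx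
    rw [pow_succ_apply]
    exact (sameCycle_swapMul_step hx).trans (ih _ (swapMul_apply_ne hx))

lemma sameCycle_of_swapMul {x y : Fin n} (hx : x ≠ a)
    (h : (Equiv.swap a (π a) * π).SameCycle x y) : π.SameCycle x y := by
  obtain ⟨k, hk⟩ := sameCycle_iff_exists_pow.mp h
  exact hk ▸ sameCycle_swapMul_aux1 k x hx

lemma sameCycle_swapMul_aux2 (hab : π a ≠ a) :
    ∀ (k : ℕ) (x : Fin n), x ≠ a → (π ^ k) x ≠ a →
      (Equiv.swap a (π a) * π).SameCycle x ((π ^ k) x) := by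
  intro k
  induction k using Nat.strong_induction_on with
  | _ k ih =>
    match k with
    | 0 => intro x _ _; simpa using Equiv.Perm.SameCycle.refl _ x
    | (k + 1) =>
      intro x hx hne
      by_cases hxa : π x = a
      · match k with
        | 0 =>
          exfalso
          rw [pow_succ_apply, hxa] at hne
          simp at hne
        | (k' + 1) =>
          have hπ'x : (Equiv.swap a (π a) * π) x = π a := by
            rw [Equiv.Perm.mul_apply, hxa, Equiv.swap_apply_left]
          have step : (Equiv.swap a (π a) * π).SameCycle x (π a) := by
            have := sc_apply (Equiv.swap a (π a) * π) x
            rwa [hπ'x] at this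
          have hrw : (π ^ (k' + 1 + 1)) x = (π ^ k') (π a) := by
            rw [pow_succ_apply, hxa, pow_succ_apply]
          rw [hrw] at hne ⊢
          exact step.trans (ih k' (by omega) (π a) hab hne)
      · have hπ'x : (Equiv.swap a (π a) * π) x = π x := by
          rw [Equiv.Perm.mul_apply,
            Equiv.swap_apply_of_ne_of_ne hxa (fun hc => hx (π.injective hc))]
        have step : (Equiv.swap a (π a) * π).SameCycle x (π x) := by
          have := sc_apply (Equiv.swap a (π a) * π) x
          rwa [hπ'x] at this
        rw [pow_succ_apply] at hne ⊢
        exact step.trans (ih k (by omega) (π x) hxa hne)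

lemma sameCycle_to_swapMul (hab : π a ≠ a) {x y : Fin n} (hx : x ≠ a) (hy : y ≠ a)
    (h : π.SameCycle x y) : (Equiv.swap a (π a) * π).SameCycle x y := by
  obtain ⟨k, hk⟩ := sameCycle_iff_exists_pow.mp h
  subst hk
  exact sameCycle_swapMul_aux2 hab k x hx hy

lemma sameCycle_swapMul_self_iff {y : Fin n} :
    (Equiv.swap a (π a) * π).SameCycle a y ↔ y = a := by
  constructor
  · rintro ⟨k, hk⟩
    rw [Equiv.Perm.zpow_apply_eq_self_of_apply_eq_self
      (swapMul_apply_self (π := π) (a := a)) k] at hk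
    exact hk.symm
  · rintro rfl; exact Equiv.Perm.SameCycle.refl _ _

lemma orb_swapMul_self : orb (Equiv.swap a (π a) * π) a = {a} := by
  ext j
  simp only [mem_orb, Finset.mem_singleton]
  rw [sameCycle_swapMul_self_iff]

lemma orb_swapMul_of_sameCycle (hab : π a ≠ a) {i : Fin n} (hi : i ≠ a)
    (hsc : π.SameCycle a i) :
    orb (Equiv.swap a (π a) * π) i = (orb π a).erase a := by
  ext j
  simp only [mem_orb, Finset.mem_erase]
  constructor
  · intro h
    have hj : j ≠ a := by
      intro hc; subst hc
      exact hi (sameCycle_swapMul_self_iff.mp h.symm)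
    exact ⟨hj, hsc.trans (sameCycle_of_swapMul hi h)⟩
  · rintro ⟨hj, hsc'⟩
    exact sameCycle_to_swapMul hab hi hj (hsc.symm.trans hsc')

lemma orb_swapMul_of_not_sameCycle (hab : π a ≠ a) {i : Fin n} (hi : i ≠ a)
    (hsc : ¬ π.SameCycle a i) :
    orb (Equiv.swap a (π a) * π) i = orb π i := by
  have hia : ¬ π.SameCycle i a := fun hc => hsc hc.symm
  ext j
  simp only [mem_orb]
  constructor
  · intro h
    exact sameCycle_of_swapMul hi h
  · intro h
    have hj : j ≠ a := by
      rintro rfl; exact hia h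
    exact sameCycle_to_swapMul hab hi hj h

end SwapMul

end WreathHelper
end Helper2
section Helper3
open WreathG Equiv Equiv.Perm Finset
namespace WreathHelper

variable {n : ℕ}

lemma isRep_iff_orb {σ : Equiv.Perm (Fin n)} {x : Fin n} :
    IsRep σ x ↔ ∀ j ∈ orb σ x, x ≤ j := by
  exact ⟨fun h j hj => h j (mem_orb.mp hj), fun h j hj => h j (mem_orb.mpr hj)⟩

lemma cyc_swapMul {π : Equiv.Perm (Fin n)} {a : Fin n} (hab : π a ≠ a) :
    cyc (Equiv.swap a (π a) * π) = cyc π + 1 := by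
  set π' := Equiv.swap a (π a) * π with hπ'
  set O := orb π a with hO
  have haO : a ∈ O := self_mem_orb a
  have hbO : π a ∈ O := mem_orb.mpr (sc_apply π a)
  have hOne : O.Nonempty := ⟨a, haO⟩
  set m := O.min' hOne with hm
  have hmO : m ∈ O := Finset.min'_mem _ _
  have hscam : π.SameCycle a m := mem_orb.mp hmO
  have hma : m ≤ a := Finset.min'_le _ _ haO
  have haR' : a ∈ repsF π' := by
    rw [mem_repsF]
    intro j hj
    rw [sameCycle_swapMul_self_iff.mp hj]
  -- orb π x = O for x in the cycle of a
  have horbx : ∀ x : Fin n, π.SameCycle a x → orb π x = O :=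
    fun x hx => (orb_eq_of_sameCycle hx).symm
  -- membership in repsF π' for x ≠ a, same cycle
  have hR'sc : ∀ x : Fin n, x ≠ a → π.SameCycle a x →
      (x ∈ repsF π' ↔ ∀ j ∈ O.erase a, x ≤ j) := by
    intro x hxa hsc
    rw [mem_repsF, isRep_iff_orb, orb_swapMul_of_sameCycle hab hxa hsc]
  have hR'nsc : ∀ x : Fin n, x ≠ a → ¬ π.SameCycle a x →
      (x ∈ repsF π' ↔ x ∈ repsF π) := by
    intro x hxa hsc
    rw [mem_repsF, mem_repsF, isRep_iff_orb, isRep_iff_orb,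
      orb_swapMul_of_not_sameCycle hab hxa hsc]
  by_cases hmaeq : m = a
  · -- a is the minimum of its cycle
    set O' := O.erase a with hO'
    have hbO' : π a ∈ O' := Finset.mem_erase.mpr ⟨hab, hbO⟩
    have hO'ne : O'.Nonempty := ⟨π a, hbO'⟩
    set m' := O'.min' hO'ne with hm'
    have hm'O' : m' ∈ O' := Finset.min'_mem _ _
    have hm'a : m' ≠ a := (Finset.mem_erase.mp hm'O').1
    have hm'O : m' ∈ O := (Finset.mem_erase.mp hm'O').2
    have hscm' : π.SameCycle a m' := mem_orb.mp hm'O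
    have haR : a ∈ repsF π := by
      rw [mem_repsF]
      intro j hj
      have : j ∈ O := mem_orb.mpr hj
      calc a = m := hmaeq.symm
        _ ≤ j := Finset.min'_le _ _ this
    have hset : repsF π' = insert a (insert m' ((repsF π).erase a)) := by
      ext x
      by_cases hxa : x = a
      · subst hxa
        simp [haR']
      · rw [Finset.mem_insert, Finset.mem_insert, Finset.mem_erase]
        have hrhs : (x = a ∨ x = m' ∨ x ≠ a ∧ x ∈ repsF π) ↔
            (x = m' ∨ x ∈ repsF π) := by
          constructor
          · rintro (h | h | ⟨_, h⟩)
            · exact absurd h hxa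
            · exact Or.inl h
            · exact Or.inr h
          · rintro (h | h)
            · exact Or.inr (Or.inl h)
            · exact Or.inr (Or.inr ⟨hxa, h⟩)
        rw [hrhs]
        by_cases hsc : π.SameCycle a x
        · have hxO : x ∈ O := mem_orb.mpr hsc
          have hxO' : x ∈ O' := Finset.mem_erase.mpr ⟨hxa, hxO⟩
          have hxnR : x ∉ repsF π := by
            intro hxR
            rw [mem_repsF] at hxR
            have h1 : x ≤ a := hxR a hsc.symm
            have h2 : a ≤ x := hmaeq ▸ Finset.min'_le _ _ hxO
            exact hxa (le_antisymm h1 h2)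
          rw [hR'sc x hxa hsc]
          constructor
          · intro h
            left
            exact le_antisymm (h m' hm'O') (Finset.min'_le _ _ hxO')
          · rintro (rfl | h)
            · exact fun j hj => Finset.min'_le _ _ hj
            · exact absurd h hxnR
        · rw [hR'nsc x hxa hsc]
          have hxm' : x ≠ m' := by
            rintro rfl; exact hsc hscm'
          constructor
          · exact fun h => Or.inr h
          · rintro (h | h)
            · exact absurd h hxm'
            · exact h
    rw [cyc, cyc, hset]
    have h1 : a ∉ insert m' ((repsF π).erase a) := by
      simp only [Finset.mem_insert, Finset.mem_erase]
      push_neg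
      exact ⟨Ne.symm hm'a, fun h => absurd rfl h⟩
    have h2 : m' ∉ (repsF π).erase a := by
      simp only [Finset.mem_erase]
      rintro ⟨-, hm'R⟩
      rw [mem_repsF] at hm'R
      have h3 : m' ≤ a := hm'R a hscm'.symm
      have h4 : a ≤ m' := hmaeq ▸ Finset.min'_le _ _ hm'O
      exact hm'a (le_antisymm h3 h4)
    rw [Finset.card_insert_of_notMem h1, Finset.card_insert_of_notMem h2,
      Finset.card_erase_of_mem haR]
    have : 1 ≤ (repsF π).card := Finset.card_pos.mpr ⟨a, haR⟩
    omega
  · -- the minimum m of the cycle of a is not a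
    have hanR : a ∉ repsF π := by
      intro h
      rw [mem_repsF] at h
      exact hmaeq (le_antisymm hma (h m hscam))
    have hmR : m ∈ repsF π := by
      rw [mem_repsF]
      intro j hj
      exact Finset.min'_le _ _ (mem_orb.mpr (hscam.trans hj))
    have hset : repsF π' = insert a (repsF π) := by
      ext x
      by_cases hxa : x = a
      · subst hxa; simp [haR']
      · rw [Finset.mem_insert]
        have hrhs : (x = a ∨ x ∈ repsF π) ↔ x ∈ repsF π := by
          constructor
          · rintro (h | h)
            · exact absurd h hxa
            · exact h
          · exact fun h => Or.inr h
        rw [hrhs]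
        by_cases hsc : π.SameCycle a x
        · have hxO : x ∈ O := mem_orb.mpr hsc
          have hmO' : m ∈ O.erase a := Finset.mem_erase.mpr ⟨hmaeq, hmO⟩
          rw [hR'sc x hxa hsc]
          constructor
          · intro h
            have hxm : x = m := le_antisymm (h m hmO') (Finset.min'_le _ _ hxO)
            subst hxm
            exact hmR
          · intro hxR
            rw [mem_repsF] at hxR
            intro j hj
            exact hxR j (hsc.symm.trans (mem_orb.mp (Finset.mem_erase.mp hj).2))
        · rw [hR'nsc x hxa hsc]
    rw [cyc, cyc, hset, Finset.card_insert_of_notMem hanR]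

end WreathHelper
end Helper3
section Helper4
open WreathG Equiv Equiv.Perm Finset
namespace WreathHelper

variable {r n : ℕ}

lemma cyc_one : cyc (1 : Equiv.Perm (Fin n)) = n := by
  have h : ∀ i ∈ (Finset.univ : Finset (Fin n)), IsRep (1 : Equiv.Perm (Fin n)) i := by
    intro i _ j hj
    rw [Equiv.Perm.sameCycle_one] at hj
    exact hj ▸ le_refl i
  rw [cyc, repsF, Finset.filter_true_of_mem h, Finset.card_univ, Fintype.card_fin]

lemma refl_mem [NeZero r] {a b : Fin n} (hab : a ≠ b) (d : ZMod r) :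
    ((fun i => if i = a then d else if i = b then -d else 0, Equiv.swap a b) : WreathG r n)
      ∈ pseudoReflections r n := by
  set t : WreathG r n := (fun i => if i = a then d else if i = b then -d else 0, Equiv.swap a b)
    with ht
  set f : (Fin n → ℂ) →ₗ[ℂ] ℂ :=
    LinearMap.proj a - (zeta r ^ d.val) • LinearMap.proj b with hf
  have hfapp : ∀ v : Fin n → ℂ, f v = v a - zeta r ^ d.val * v b := fun v => rfl
  have ht1 : ∀ i, t.1 i = if i = a then d else if i = b then -d else 0 := fun i => rfl
  have hker : LinearMap.ker (toLin t - LinearMap.id) = LinearMap.ker f := by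
    ext v
    rw [show LinearMap.ker (toLin t - LinearMap.id) = fixSub t from rfl, mem_fixSub,
      LinearMap.mem_ker, hfapp, funext_iff]
    have hinv : t.2⁻¹ = Equiv.swap a b := by
      show (Equiv.swap a b)⁻¹ = Equiv.swap a b
      exact Equiv.swap_inv a b
    constructor
    · intro h
      have := h a
      rw [toLin_apply, hinv, Equiv.swap_apply_left] at this
      rw [ht1 a, if_pos rfl] at this
      rw [this]
      ring
    · intro h i
      have hab' : v a = zeta r ^ d.val * v b := by
        have := sub_eq_zero.mp h
        linear_combination this
      rw [toLin_apply, hinv]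
      by_cases hia : i = a
      · subst hia
        rw [Equiv.swap_apply_left, ht1 i, if_pos rfl, ← hab']
      · by_cases hib : i = b
        · rw [ht1 i, if_neg hia, if_pos hib, hib, Equiv.swap_apply_right]
          rw [hab', ← mul_assoc, ← zeta_pow_val_add, neg_add_cancel, zeta_pow_val_zero,
            one_mul]
        · rw [Equiv.swap_apply_of_ne_of_ne hia hib, ht1 i, if_neg hia, if_neg hib,
            ZMod.val_zero, pow_zero, one_mul]
  have hsurj : Function.Surjective f := by
    intro z
    refine ⟨fun i => if i = a then z else 0, ?_⟩
    rw [hfapp, if_pos rfl, if_neg (Ne.symm hab), mul_zero, sub_zero]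
  have hrank := LinearMap.finrank_range_add_finrank_ker f
  rw [LinearMap.range_eq_top.mpr hsurj, finrank_top, Module.finrank_self,
    Module.finrank_fintype_fun_eq_card, Fintype.card_fin] at hrank
  show Module.finrank ℂ (LinearMap.ker (toLin t - LinearMap.id)) = n - 1
  rw [hker]
  omega

lemma fixSub_one [NeZero r] : fixSub (1 : WreathG r n) = ⊤ := by
  rw [fixSub, toLin_one, sub_self, LinearMap.ker_zero]

lemma inf_fix_le [NeZero r] (g h : WreathG r n) :
    fixSub g ⊓ fixSub h ≤ fixSub (g * h) := by
  intro v hv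
  rw [Submodule.mem_inf] at hv
  obtain ⟨hg, hh⟩ := hv
  rw [mem_fixSub] at hg hh ⊢
  rw [toLin_mul, LinearMap.comp_apply, hh, hg]

lemma fix_lower [NeZero r] [NeZero n] (l : List (WreathG r n))
    (hl : ∀ t ∈ l, t ∈ pseudoReflections r n) :
    n ≤ Module.finrank ℂ (fixSub l.prod) + l.length := by
  induction l with
  | nil =>
    have h1 : fixSub (([] : List (WreathG r n)).prod) = ⊤ := fixSub_one
    rw [List.length_nil, add_zero, h1, finrank_top, Module.finrank_fintype_fun_eq_card,
      Fintype.card_fin]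
  | cons t l ih =>
    have ht : t ∈ pseudoReflections r n := hl t (List.mem_cons_self)
    have hl' : ∀ s ∈ l, s ∈ pseudoReflections r n := fun s hs => hl s (List.mem_cons_of_mem t hs)
    have ihl := ih hl'
    rw [List.prod_cons, List.length_cons]
    have h1 := Submodule.finrank_sup_add_finrank_inf_eq (fixSub t) (fixSub l.prod)
    have h2 : Module.finrank ℂ ↥(fixSub t ⊔ fixSub l.prod) ≤ n := by
      have := Submodule.finrank_le (fixSub t ⊔ fixSub l.prod)
      rwa [Module.finrank_fintype_fun_eq_card, Fintype.card_fin] at this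
    have h3 : Module.finrank ℂ ↥(fixSub t ⊓ fixSub l.prod) ≤
        Module.finrank ℂ (fixSub (t * l.prod)) :=
      Submodule.finrank_mono (inf_fix_le t l.prod)
    have h4 : Module.finrank ℂ (fixSub t) = n - 1 := ht
    have h5 : 1 ≤ n := Nat.one_le_iff_ne_zero.mpr (NeZero.ne n)
    omega

lemma finrank_fix_le_cyc [NeZero r] (g : WreathG r n) :
    Module.finrank ℂ (fixSub g) ≤ cyc g.2 := by
  set φ : ↥(fixSub g) →ₗ[ℂ] (↥(repsF g.2) → ℂ) :=
    { toFun := fun v m => (v : Fin n → ℂ) m.1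
      map_add' := fun u v => rfl
      map_smul' := fun c v => rfl } with hφ
  have hprop : ∀ w : Fin n → ℂ, w ∈ fixSub g → ∀ (k : ℕ) (x : Fin n), w x = 0 →
      w ((g.2 ^ k) x) = 0 := by
    intro w hw k x hx
    induction k with
    | zero => simpa using hx
    | succ k ihk =>
      have heq : ∀ i, w i = zeta r ^ (g.1 i).val * w (g.2⁻¹ i) := by
        intro i
        have := congrFun (mem_fixSub.mp hw) i
        rw [toLin_apply] at this
        exact this.symm
      have hstep : (g.2 ^ (k + 1)) x = g.2 ((g.2 ^ k) x) := by
        rw [pow_succ', Equiv.Perm.mul_apply]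
      rw [hstep, heq (g.2 ((g.2 ^ k) x)), Equiv.Perm.inv_eq_iff_eq.mpr (rfl : g.2 ((g.2 ^ k) x) = g.2 ((g.2 ^ k) x)), ihk, mul_zero]
  have hinj : Function.Injective φ := by
    rw [← LinearMap.ker_eq_bot, LinearMap.ker_eq_bot']
    intro v hv
    have hv' : ∀ m : ↥(repsF g.2), (v : Fin n → ℂ) m.1 = 0 := fun m => congrFun hv m
    apply Subtype.ext
    funext j
    have hne : j ∈ orb g.2 j := self_mem_orb j
    set m := (orb g.2 j).min' ⟨j, hne⟩ with hm
    have hmR : m ∈ repsF g.2 := mem_repsF.mpr (min_orb_isRep g.2 j)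
    have hsc : g.2.SameCycle m j := sameCycle_min_orb g.2 j
    obtain ⟨k, hk⟩ := sameCycle_iff_exists_pow.mp hsc
    have := hprop v.1 v.2 k m (hv' ⟨m, hmR⟩)
    rw [hk] at this
    exact this
  have hle := LinearMap.finrank_le_finrank_of_injective hinj
  rwa [Module.finrank_fintype_fun_eq_card, Fintype.card_coe] at hle

end WreathHelper
end Helper4
section Helper5
open WreathG Equiv Equiv.Perm Finset
namespace WreathHelper

variable {r n : ℕ}

lemma support_swapMul_ssubset {π : Equiv.Perm (Fin n)} {a : Fin n} (ha : π a ≠ a) :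
    (Equiv.swap a (π a) * π).support ⊂ π.support := by
  constructor
  · intro x hx
    rw [Equiv.Perm.mem_support] at hx ⊢
    intro hc
    apply hx
    by_cases hxa : x = a
    · subst hxa; exact swapMul_apply_self
    · by_cases hxb : x = π a
      · exfalso
        apply ha
        subst hxb
        exact π.injective hc
      · rw [Equiv.Perm.mul_apply, hc, Equiv.swap_apply_of_ne_of_ne hxa hxb]
  · intro hsub
    have h1 : a ∈ π.support := Equiv.Perm.mem_support.mpr ha
    have h2 : a ∉ (Equiv.swap a (π a) * π).support := by
      rw [Equiv.Perm.mem_support]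
      push_neg
      exact swapMul_apply_self
    exact h2 (hsub h1)

lemma orb_one (i : Fin n) : orb (1 : Equiv.Perm (Fin n)) i = {i} := by
  ext j
  rw [mem_orb, Equiv.Perm.sameCycle_one, Finset.mem_singleton, eq_comm]

lemma eq_one_of_balanced_support_empty [NeZero r] {g : WreathG r n}
    (hsupp : g.2.support = ∅) (hbal : Balanced g) : g = 1 := by
  have hperm : g.2 = 1 := Equiv.Perm.support_eq_empty_iff.mp hsupp
  have hcol : g.1 = fun _ => 0 := by
    funext i
    have := balanced_iff.mp hbal i
    rw [hperm, orb_one, Finset.sum_singleton] at this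
    exact this
  have : g = (g.1, g.2) := rfl
  rw [this, hcol, hperm]
  rfl

lemma exists_word [NeZero r] (g : WreathG r n) (hbal : Balanced g) :
    ∃ l : List (WreathG r n), (∀ t ∈ l, t ∈ pseudoReflections r n) ∧ l.prod = g ∧
      l.length = n - cyc g.2 := by
  generalize hN : g.2.support.card = N
  induction N using Nat.strong_induction_on generalizing g with
  | _ N ih =>
  by_cases hsupp : g.2.support = ∅
  · refine ⟨[], by simp, ?_, ?_⟩
    · rw [List.prod_nil, eq_one_of_balanced_support_empty hsupp hbal]
    · rw [eq_one_of_balanced_support_empty hsupp hbal]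
      show 0 = n - cyc (1 : WreathG r n).2
      rw [wone_snd, cyc_one, Nat.sub_self]
  · obtain ⟨a, ha⟩ := Finset.nonempty_iff_ne_empty.mpr hsupp
    have ha' : g.2 a ≠ a := Equiv.Perm.mem_support.mp ha
    set b := g.2 a with hb
    have hab : a ≠ b := fun h => ha' h.symm
    set d : ZMod r := -(g.1 b) with hd
    set t : WreathG r n :=
      (fun i => if i = a then d else if i = b then -d else 0, Equiv.swap a b) with htdef
    have htmem : t ∈ pseudoReflections r n := refl_mem hab d
    have ht1 : ∀ i, t.1 i = if i = a then d else if i = b then -d else 0 := fun i => rfl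
    have ht2 : t.2 = Equiv.swap a b := rfl
    have htt : t * t = 1 := by
      apply Prod.ext
      · funext i
        show t.1 i + t.1 (t.2⁻¹ i) = 0
        rw [ht2, show (Equiv.swap a b)⁻¹ = Equiv.swap a b from Equiv.swap_inv a b]
        by_cases hia : i = a
        · subst hia
          rw [Equiv.swap_apply_left, ht1, ht1, if_pos rfl, if_neg hab.symm, if_pos rfl,
            add_neg_cancel]
        · by_cases hib : i = b
          · subst hib
            rw [Equiv.swap_apply_right, ht1, ht1, if_neg hia, if_pos rfl, if_pos rfl,
              neg_add_cancel]
          · rw [Equiv.swap_apply_of_ne_of_ne hia hib, ht1, if_neg hia, if_neg hib, add_zero]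
      · show t.2 * t.2 = 1
        rw [ht2, Equiv.swap_mul_self]
    set g' : WreathG r n := t * g with hg'def
    have hg'2 : g'.2 = Equiv.swap a (g.2 a) * g.2 := rfl
    have hg'1 : ∀ i, g'.1 i =
        if i = a then 0 else if i = b then g.1 b + g.1 a else g.1 i := by
      intro i
      show t.1 i + g.1 (t.2⁻¹ i) = _
      rw [ht2, show (Equiv.swap a b)⁻¹ = Equiv.swap a b from Equiv.swap_inv a b]
      by_cases hia : i = a
      · subst hia
        rw [if_pos rfl, Equiv.swap_apply_left, ht1, if_pos rfl, hd, neg_add_cancel]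
      · by_cases hib : i = b
        · subst hib
          rw [if_neg hia, if_pos rfl, Equiv.swap_apply_right, ht1, if_neg hia, if_pos rfl,
            hd, neg_neg]
        · rw [if_neg hia, if_neg hib, Equiv.swap_apply_of_ne_of_ne hia hib, ht1,
            if_neg hia, if_neg hib, zero_add]
    have haO : a ∈ orb g.2 a := self_mem_orb a
    have hbal' : Balanced g' := by
      rw [balanced_iff]
      intro i
      rw [hg'2]
      by_cases hia : i = a
      · subst hia
        rw [orb_swapMul_self, Finset.sum_singleton, hg'1, if_pos rfl]
      · by_cases hsc : g.2.SameCycle a i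
        · rw [orb_swapMul_of_sameCycle ha' hia hsc]
          have hsum : ∀ j ∈ (orb g.2 a).erase a,
              g'.1 j = g.1 j + (if j = b then g.1 a else 0) := by
            intro j hj
            have hja : j ≠ a := (Finset.mem_erase.mp hj).1
            rw [hg'1, if_neg hja]
            by_cases hjb : j = b
            · rw [if_pos hjb, if_pos hjb, hjb]
            · rw [if_neg hjb, if_neg hjb, add_zero]
          rw [Finset.sum_congr rfl hsum, Finset.sum_add_distrib]
          have hbmem : b ∈ (orb g.2 a).erase a :=
            Finset.mem_erase.mpr ⟨hab.symm, mem_orb.mpr (sc_apply g.2 a)⟩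
          rw [Finset.sum_ite_eq' ((orb g.2 a).erase a) b (fun _ => g.1 a), if_pos hbmem]
          have hba := balanced_iff.mp hbal a
          have hsplit := Finset.sum_erase_add (orb g.2 a) g.1 haO
          rw [hba] at hsplit
          have : ∑ j ∈ (orb g.2 a).erase a, g.1 j = -(g.1 a) :=
            eq_neg_of_add_eq_zero_left hsplit
          rw [this, neg_add_cancel]
        · rw [orb_swapMul_of_not_sameCycle ha' hia hsc]
          have hsum : ∀ j ∈ orb g.2 i, g'.1 j = g.1 j := by
            intro j hj
            have hsc_ij : g.2.SameCycle i j := mem_orb.mp hj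
            have hja : j ≠ a := by
              rintro rfl
              exact hsc hsc_ij.symm
            have hjb : j ≠ b := by
              rintro rfl
              exact hsc ((sc_apply g.2 a).trans hsc_ij.symm)
            rw [hg'1, if_neg hja, if_neg hjb]
          rw [Finset.sum_congr rfl hsum]
          exact balanced_iff.mp hbal i
    have hcyc' : cyc g'.2 = cyc g.2 + 1 := by
      rw [hg'2]
      exact cyc_swapMul ha'
    have hcard : g'.2.support.card < N := by
      rw [← hN, hg'2]
      exact Finset.card_lt_card (support_swapMul_ssubset ha')
    obtain ⟨l', hmem', hprod', hlen'⟩ := ih g'.2.support.card hcard g' hbal' rfl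
    refine ⟨t :: l', ?_, ?_, ?_⟩
    · intro s hs
      rcases List.mem_cons.mp hs with rfl | hs'
      · exact htmem
      · exact hmem' s hs'
    · rw [List.prod_cons, hprod', hg'def, ← mul_assoc, htt, one_mul]
    · rw [List.length_cons, hlen', hcyc']
      have h1 : cyc g'.2 ≤ n := cyc_le g'.2
      rw [hcyc'] at h1
      omega

lemma absLength_eq [NeZero r] [NeZero n] (g : WreathG r n) (hbal : Balanced g) :
    absLength (pseudoReflections r n) g = n - cyc g.2 := by
  obtain ⟨l, hmem, hprod, hlen⟩ := exists_word g hbal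
  have hmemset : (n - cyc g.2) ∈
      {k | ∃ l : List (WreathG r n), (∀ t ∈ l, t ∈ pseudoReflections r n) ∧
        l.prod = g ∧ l.length = k} := ⟨l, hmem, hprod, hlen⟩
  refine le_antisymm (Nat.sInf_le hmemset) (le_csInf ⟨_, hmemset⟩ ?_)
  rintro k ⟨l', h1, h2, h3⟩
  have h4 := fix_lower l' h1
  rw [h2] at h4
  have h5 := finrank_fix_le_cyc g
  omega

end WreathHelper
end Helper5
section Helper6
open WreathG Equiv Equiv.Perm Finset
namespace WreathHelper

variable {r n : ℕ}

/-- Extension of values off representatives to a balanced coloring. -/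
noncomputable def DCol (π : Equiv.Perm (Fin n))
    (d : ↥(Finset.univ \ repsF π) → ZMod r) : Fin n → ZMod r :=
  fun x => if hx : x ∈ Finset.univ \ repsF π then d ⟨x, hx⟩ else 0

noncomputable def extCol (π : Equiv.Perm (Fin n))
    (d : ↥(Finset.univ \ repsF π) → ZMod r) : Fin n → ZMod r :=
  fun i => if i ∈ repsF π then -∑ j ∈ (orb π i).erase i, DCol π d j else DCol π d i

lemma nonrep_of_mem_erase {π : Equiv.Perm (Fin n)} {i j : Fin n} (hi : i ∈ repsF π)
    (hj : j ∈ (orb π i).erase i) : j ∈ Finset.univ \ repsF π := by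
  rw [Finset.mem_sdiff]
  refine ⟨Finset.mem_univ j, fun hjR => ?_⟩
  obtain ⟨hji, hjo⟩ := Finset.mem_erase.mp hj
  exact hji (isRep_unique (mem_repsF.mp hjR) (mem_repsF.mp hi) (mem_orb.mp hjo).symm)

lemma card_balanced [NeZero r] (π : Equiv.Perm (Fin n)) :
    (Finset.univ.filter (fun c : Fin n → ZMod r =>
      Balanced ((c, π) : WreathG r n))).card = r ^ (n - cyc π) := by
  have key : (Finset.univ.filter (fun c : Fin n → ZMod r =>
      Balanced ((c, π) : WreathG r n))).card =
      (Finset.univ : Finset (↥(Finset.univ \ repsF π) → ZMod r)).card := by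
    apply Finset.card_nbij' (fun c => fun j => c j.1) (fun d => extCol π d)
    · intro c _
      exact Finset.mem_univ _
    · -- extension is balanced
      intro d _
      rw [Finset.coe_filter]
      refine ⟨Finset.mem_univ _, ?_⟩
      refine balanced_iff.mpr ?_
      intro i
      show ∑ j ∈ orb π i, extCol π d j = 0
      have hne : (orb π i).Nonempty := ⟨i, self_mem_orb i⟩
      set m := (orb π i).min' hne with hm
      have hmR : m ∈ repsF π := mem_repsF.mpr (min_orb_isRep π i)
      have horb : orb π i = orb π m := (orb_eq_of_sameCycle (sameCycle_min_orb π i)).symm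
      have hmO : m ∈ orb π m := self_mem_orb m
      rw [horb, ← Finset.sum_erase_add (orb π m) _ hmO]
      have hval : ∀ j ∈ (orb π m).erase m, extCol π d j = DCol π d j := by
        intro j hj
        have hjn := nonrep_of_mem_erase hmR hj
        rw [extCol, if_neg (fun hc => (Finset.mem_sdiff.mp hjn).2 hc)]
      rw [Finset.sum_congr rfl hval]
      rw [show extCol π d m = -∑ j ∈ (orb π m).erase m, DCol π d j from by
        rw [extCol, if_pos hmR]]
      exact add_neg_cancel _
    · -- left inverse
      intro c hc
      have hbal : Balanced ((c, π) : WreathG r n) := by simpa using hc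
      funext i
      show extCol π (fun j : ↥(Finset.univ \ repsF π) => c j.1) i = c i
      by_cases hiR : i ∈ repsF π
      · rw [extCol, if_pos hiR]
        have hval : ∀ j ∈ (orb π i).erase i,
            DCol π (fun j : ↥(Finset.univ \ repsF π) => c j.1) j = c j := by
          intro j hj
          rw [DCol, dif_pos (nonrep_of_mem_erase hiR hj)]
        rw [Finset.sum_congr rfl hval]
        have hsplit := Finset.sum_erase_add (orb π i) c (self_mem_orb i)
        rw [balanced_iff.mp hbal i] at hsplit
        have h2 := eq_neg_of_add_eq_zero_left hsplit
        rw [show ((orb π i).erase i).sum c = ∑ x ∈ (orb π i).erase i, c x from rfl, h2,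
          neg_neg]
      · rw [extCol, if_neg hiR, DCol,
          dif_pos (Finset.mem_sdiff.mpr ⟨Finset.mem_univ i, hiR⟩)]
    · -- right inverse
      intro d _
      funext j
      obtain ⟨jv, hjv⟩ := j
      show extCol π d jv = d ⟨jv, hjv⟩
      have hjn : jv ∉ repsF π := (Finset.mem_sdiff.mp hjv).2
      rw [extCol, if_neg hjn, DCol, dif_pos hjv]
  rw [key, Finset.card_univ, Fintype.card_fun]
  rw [ZMod.card r, Fintype.card_coe, Finset.card_sdiff_of_subset (Finset.subset_univ _),
    Finset.card_univ, Fintype.card_fin]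
  rfl

end WreathHelper
end Helper6
section Helper7
open Equiv Equiv.Perm Finset
namespace WreathHelper

/-- Embedding of `Perm (Fin n)` into `Perm (Fin (n+1))` fixing `0`. -/
noncomputable def E {m : ℕ} (σ : Equiv.Perm (Fin m)) : Equiv.Perm (Fin (m + 1)) :=
  Equiv.Perm.decomposeFin.symm (0, σ)

variable {m : ℕ}

lemma E_zero (σ : Equiv.Perm (Fin m)) : E σ 0 = 0 :=
  Equiv.Perm.decomposeFin_symm_apply_zero 0 σ

lemma E_succ (σ : Equiv.Perm (Fin m)) (x : Fin m) : E σ x.succ = (σ x).succ := by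
  rw [E, Equiv.Perm.decomposeFin_symm_apply_succ, Equiv.swap_self]
  rfl

lemma E_pow_succ (σ : Equiv.Perm (Fin m)) (k : ℕ) (x : Fin m) :
    (E σ ^ k) x.succ = ((σ ^ k) x).succ := by
  induction k generalizing x with
  | zero => simp
  | succ k ihk =>
    rw [pow_succ_apply, pow_succ_apply, E_succ, ihk]

lemma sameCycle_E_zero {σ : Equiv.Perm (Fin m)} {y : Fin (m + 1)} :
    (E σ).SameCycle 0 y ↔ y = 0 := by
  constructor
  · rintro ⟨k, hk⟩
    rw [Equiv.Perm.zpow_apply_eq_self_of_apply_eq_self (E_zero σ) k] at hk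
    exact hk.symm
  · rintro rfl; exact Equiv.Perm.SameCycle.refl _ _

lemma sameCycle_E_succ {σ : Equiv.Perm (Fin m)} {x y : Fin m} :
    (E σ).SameCycle x.succ y.succ ↔ σ.SameCycle x y := by
  rw [sameCycle_iff_exists_pow, sameCycle_iff_exists_pow]
  constructor
  · rintro ⟨k, hk⟩
    rw [E_pow_succ] at hk
    exact ⟨k, Fin.succ_injective m hk⟩
  · rintro ⟨k, hk⟩
    exact ⟨k, by rw [E_pow_succ, hk]⟩

lemma isRep_E_zero (σ : Equiv.Perm (Fin m)) : IsRep (E σ) 0 := by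
  intro j hj
  exact Fin.zero_le j

lemma isRep_E_succ {σ : Equiv.Perm (Fin m)} {x : Fin m} :
    IsRep (E σ) x.succ ↔ IsRep σ x := by
  constructor
  · intro h y hy
    have := h y.succ (sameCycle_E_succ.mpr hy)
    exact Fin.succ_le_succ_iff.mp this
  · intro h j hj
    induction j using Fin.cases with
    | zero =>
      exfalso
      have := sameCycle_E_zero.mp hj.symm
      exact Fin.succ_ne_zero x this
    | succ y =>
      exact Fin.succ_le_succ_iff.mpr (h y (sameCycle_E_succ.mp hj))

lemma cyc_E (σ : Equiv.Perm (Fin m)) : cyc (E σ) = cyc σ + 1 := by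
  have hset : repsF (E σ) = insert 0 ((repsF σ).image Fin.succ) := by
    ext j
    induction j using Fin.cases with
    | zero =>
      constructor
      · intro _; exact Finset.mem_insert_self 0 _
      · intro _; exact mem_repsF.mpr (isRep_E_zero σ)
    | succ y =>
      rw [mem_repsF, isRep_E_succ]
      simp only [Finset.mem_insert, Finset.mem_image]
      constructor
      · intro h
        exact Or.inr ⟨y, mem_repsF.mpr h, rfl⟩
      · rintro ((h : y.succ = 0) | ⟨x, hx, hxy⟩)
        · exact absurd h (Fin.succ_ne_zero y)
        · have : x = y := Fin.succ_injective m hxy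
          subst this
          exact mem_repsF.mp hx
  have h0 : (0 : Fin (m + 1)) ∉ (repsF σ).image Fin.succ := by
    simp only [Finset.mem_image]
    rintro ⟨x, -, hx⟩
    exact Fin.succ_ne_zero x hx
  rw [cyc, cyc, hset, Finset.card_insert_of_notMem h0,
    Finset.card_image_of_injective _ (Fin.succ_injective m)]

lemma decomposeFin_symm_eq (p : Fin (m + 1)) (σ : Equiv.Perm (Fin m)) :
    Equiv.Perm.decomposeFin.symm (p, σ) = Equiv.swap 0 p * E σ := by
  apply Equiv.ext
  intro j
  induction j using Fin.cases with
  | zero =>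
    rw [Equiv.Perm.decomposeFin_symm_apply_zero, Equiv.Perm.mul_apply, E_zero,
      Equiv.swap_apply_left]
  | succ x =>
    rw [Equiv.Perm.decomposeFin_symm_apply_succ, Equiv.Perm.mul_apply, E_succ]

lemma cyc_decomposeFin_ne {p : Fin (m + 1)} (hp : p ≠ 0) (σ : Equiv.Perm (Fin m)) :
    cyc (Equiv.Perm.decomposeFin.symm (p, σ)) = cyc σ := by
  rw [decomposeFin_symm_eq]
  set ρ := Equiv.swap 0 p * E σ with hρ
  have hρ0 : ρ 0 = p := by
    rw [hρ, Equiv.Perm.mul_apply, E_zero, Equiv.swap_apply_left]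
  have hne : ρ 0 ≠ 0 := hρ0 ▸ hp
  have hkey := cyc_swapMul hne
  have hE : Equiv.swap 0 (ρ 0) * ρ = E σ := by
    rw [hρ0, hρ, ← mul_assoc, Equiv.swap_mul_self, one_mul]
  rw [hE, cyc_E] at hkey
  omega

lemma stirling {R : Type*} [CommRing R] (q : R) :
    ∀ m : ℕ, (∑ π : Equiv.Perm (Fin m), q ^ (m - cyc π)) =
      ∏ i ∈ Finset.range m, (1 + (i : R) * q) := by
  intro m
  induction m with
  | zero =>
    rw [Finset.range_zero, Finset.prod_empty]
    have h : ∀ π : Equiv.Perm (Fin 0), q ^ (0 - cyc π) = 1 := by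
      intro π
      rw [Nat.zero_sub, pow_zero]
    rw [Finset.sum_congr rfl (fun π _ => h π), Finset.sum_const, Finset.card_univ,
      Fintype.card_perm, Fintype.card_fin, Nat.factorial_zero, one_smul]
  | succ m ih =>
    rw [← Equiv.sum_comp (Equiv.Perm.decomposeFin (n := m)).symm
      (fun τ => q ^ (m + 1 - cyc τ)), Fintype.sum_prod_type]
    have hzero : ∀ σ : Equiv.Perm (Fin m),
        q ^ (m + 1 - cyc (Equiv.Perm.decomposeFin.symm (0, σ))) = q ^ (m - cyc σ) := by
      intro σ
      rw [show Equiv.Perm.decomposeFin.symm ((0 : Fin (m+1)), σ) = E σ from rfl, cyc_E,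
        Nat.succ_sub_succ]
    have hne : ∀ p : Fin (m + 1), p ≠ 0 → ∀ σ : Equiv.Perm (Fin m),
        q ^ (m + 1 - cyc (Equiv.Perm.decomposeFin.symm (p, σ))) = q ^ (m - cyc σ) * q := by
      intro p hp σ
      rw [cyc_decomposeFin_ne hp, ← pow_succ]
      congr 1
      have := cyc_le σ
      omega
    rw [← Finset.sum_erase_add _ _ (Finset.mem_univ (0 : Fin (m + 1)))]
    have h1 : ∑ σ : Equiv.Perm (Fin m),
        q ^ (m + 1 - cyc (Equiv.Perm.decomposeFin.symm ((0 : Fin (m+1)), σ))) =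
        ∑ σ : Equiv.Perm (Fin m), q ^ (m - cyc σ) :=
      Finset.sum_congr rfl (fun σ _ => hzero σ)
    have h2 : ∑ p ∈ Finset.univ.erase (0 : Fin (m + 1)), ∑ σ : Equiv.Perm (Fin m),
        q ^ (m + 1 - cyc (Equiv.Perm.decomposeFin.symm (p, σ))) =
        ∑ p ∈ Finset.univ.erase (0 : Fin (m + 1)),
          ((∑ σ : Equiv.Perm (Fin m), q ^ (m - cyc σ)) * q) := by
      refine Finset.sum_congr rfl (fun p hp => ?_)
      have hp0 : p ≠ 0 := Finset.ne_of_mem_erase hp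
      rw [Finset.sum_congr rfl (fun σ _ => hne p hp0 σ), Finset.sum_mul]
    rw [h1, h2, Finset.sum_const, Finset.card_erase_of_mem (Finset.mem_univ _),
      Finset.card_univ, Fintype.card_fin, ih, Finset.prod_range_succ]
    rw [nsmul_eq_mul]
    push_cast
    ring
end WreathHelper
end Helper7
theorem rank_gen_of_balanced_elements (r n : ℕ) [NeZero r] [NeZero n] :
    (∑ g ∈ Finset.univ.filter (fun g : WreathG r n => WreathG.Balanced g),
        (Polynomial.X : Polynomial ℤ) ^ absLength (WreathG.pseudoReflections r n) g) =
      ∏ i ∈ Finset.Ioo 0 n, (1 + Polynomial.C ((r : ℤ) * (i : ℤ)) * Polynomial.X) := by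
  open WreathHelper Polynomial Finset in
  have hn : 0 < n := Nat.pos_of_ne_zero (NeZero.ne n)
  -- Step 1: replace absLength by n - cyc
  have h1 : (∑ g ∈ Finset.univ.filter (fun g : WreathG r n => WreathG.Balanced g),
      (Polynomial.X : Polynomial ℤ) ^ absLength (WreathG.pseudoReflections r n) g) =
      ∑ g ∈ Finset.univ.filter (fun g : WreathG r n => WreathG.Balanced g),
        (Polynomial.X : Polynomial ℤ) ^ (n - cyc g.2) :=
    Finset.sum_congr rfl fun g hg => by
      rw [absLength_eq g (Finset.mem_filter.mp hg).2]
  rw [h1, Finset.sum_filter]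
  -- Step 2: sum over the product type
  have h2 : (∑ g : WreathG r n,
      if WreathG.Balanced g then (Polynomial.X : Polynomial ℤ) ^ (n - cyc g.2) else 0) =
      ∑ p : (Fin n → ZMod r) × Equiv.Perm (Fin n),
        if WreathG.Balanced p then (Polynomial.X : Polynomial ℤ) ^ (n - cyc p.2) else 0 :=
    Fintype.sum_equiv (Equiv.cast rfl) _ _ (fun g => rfl)
  rw [h2, Fintype.sum_prod_type, Finset.sum_comm]
  -- Step 3: inner sum
  have h3 : ∀ π : Equiv.Perm (Fin n),
      (∑ c : Fin n → ZMod r,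
        if WreathG.Balanced ((c, π) : WreathG r n)
          then (Polynomial.X : Polynomial ℤ) ^ (n - cyc π) else 0) =
      (Polynomial.C (r : ℤ) * Polynomial.X) ^ (n - cyc π) := by
    intro π
    rw [← Finset.sum_filter, Finset.sum_const, card_balanced π, nsmul_eq_mul]
    push_cast
    rw [show ((r : ℤ[X])) = Polynomial.C (r : ℤ) from by
      rw [← Polynomial.C_eq_natCast]]
    rw [← mul_pow]
  rw [Finset.sum_congr rfl (fun π _ => h3 π)]
  -- Step 4: Stirling identity
  rw [WreathHelper.stirling (Polynomial.C (r : ℤ) * Polynomial.X) n]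
  -- Step 5: convert the range product to the Ioo product
  have h4 : ∀ i : ℕ,
      (1 + (i : ℤ[X]) * (Polynomial.C (r : ℤ) * Polynomial.X)) =
      1 + Polynomial.C ((r : ℤ) * (i : ℤ)) * Polynomial.X := by
    intro i
    rw [Polynomial.C_mul, show ((i : ℤ[X])) = Polynomial.C (i : ℤ) from by
      rw [← Polynomial.C_eq_natCast]]
    ring
  rw [Finset.prod_congr rfl (fun i _ => h4 i)]
  have h5 : Finset.range n = insert 0 (Finset.Ioo 0 n) := by
    ext x
    simp only [Finset.mem_range, Finset.mem_insert, Finset.mem_Ioo]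
    omega
  rw [h5, Finset.prod_insert (by simp)]
  rw [show (1 + Polynomial.C ((r : ℤ) * ((0 : ℕ) : ℤ)) * Polynomial.X : ℤ[X]) = 1 from by
    simp]
  rw [one_mul]
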